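/- Let G be a finite simple graph with n vertices and m edges, let s ≥ 1 be an integer, and let G* be the s-subdivision of G, which has N = n + s·m vertices. Then for every integer k ≥ 0, G has an induced forest on n − k vertices if and only if G* has an induced forest on N − k vertices. -/

import Mathlib

/-- The smaller endpoint of an unordered pair of vertices, w.r.t. a linear order. -/
def Sym2.inf' {V : Type*} [LinearOrder V] (e : Sym2 V) : V :=
  Sym2.lift ⟨fun a b => a ⊓ b, fun a b => inf_comm a b⟩ e

/-- The larger endpoint of an unordered pair of vertices, w.r.t. a linear order. -/
def Sym2.sup' {V : Type*} [LinearOrder V] (e : Sym2 V) : V :=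
  Sym2.lift ⟨fun a b => a ⊔ b, fun a b => sup_comm a b⟩ e

/-- The `s`-subdivision `G*` of `G`: every edge `uv` of `G` is replaced by a path
`u, x¹_uv, …, xˢ_uv, v` through `s` new internal vertices; the internal vertices introduced
for distinct edges are pairwise distinct.  The internal vertices of the edge `e` are the pairs
`(e, i)` for `i : Fin s`, laid out from the smaller endpoint of `e` to the larger one. -/
def SimpleGraph.subdivision {V : Type*} [LinearOrder V] (G : SimpleGraph V) (s : ℕ) :
    SimpleGraph (V ⊕ (G.edgeSet × Fin s)) :=
  SimpleGraph.fromRel fun x y =>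
    match x, y with
    | Sum.inl u, Sum.inr (e, i) =>
        (u = Sym2.inf' (e : Sym2 V) ∧ (i : ℕ) = 0) ∨
          (u = Sym2.sup' (e : Sym2 V) ∧ (i : ℕ) = s - 1)
    | Sum.inr (e, i), Sum.inr (f, j) => e = f ∧ (i : ℕ) + 1 = (j : ℕ)
    | _, _ => False


open SimpleGraph Sum Set

section basics
variable {V : Type*} [LinearOrder V]

lemma sym2_infsup (e : Sym2 V) : s(e.inf', e.sup') = e := by
  induction e with
  | _ a b =>
    simp only [Sym2.inf', Sym2.sup', Sym2.lift_mk]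
    rcases le_total a b with h | h
    · rw [inf_eq_left.mpr h, sup_eq_right.mpr h]
    · rw [inf_eq_right.mpr h, sup_eq_left.mpr h, Sym2.eq_swap]

variable {G : SimpleGraph V}

lemma adj_infsup {e : Sym2 V} (he : e ∈ G.edgeSet) : G.Adj e.inf' e.sup' := by
  rw [← SimpleGraph.mem_edgeSet, sym2_infsup]; exact he

variable {s : ℕ}

lemma not_adj_inl_inl {u v : V} : ¬ (G.subdivision s).Adj (inl u) (inl v) := by
  simp [SimpleGraph.subdivision, SimpleGraph.fromRel_adj]

lemma adj_inl_inr {u : V} {e : G.edgeSet} {i : Fin s} :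
    (G.subdivision s).Adj (inl u) (inr (e, i)) ↔
      (u = Sym2.inf' (e : Sym2 V) ∧ (i : ℕ) = 0) ∨
        (u = Sym2.sup' (e : Sym2 V) ∧ (i : ℕ) = s - 1) := by
  simp [SimpleGraph.subdivision, SimpleGraph.fromRel_adj]

lemma adj_inr_inr {e f : G.edgeSet} {i j : Fin s} :
    (G.subdivision s).Adj (inr (e, i)) (inr (f, j)) ↔
      e = f ∧ ((i : ℕ) + 1 = (j : ℕ) ∨ (j : ℕ) + 1 = (i : ℕ)) := by
  rw [SimpleGraph.subdivision, SimpleGraph.fromRel_adj]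
  constructor
  · rintro ⟨hne, (⟨h1, h2⟩ | ⟨h1, h2⟩)⟩
    · exact ⟨h1, Or.inl h2⟩
    · exact ⟨h1.symm, Or.inr h2⟩
  · rintro ⟨rfl, (h | h)⟩
    · exact ⟨by simp [Prod.ext_iff]; omega, Or.inl ⟨rfl, h⟩⟩
    · exact ⟨by simp [Prod.ext_iff]; omega, Or.inr ⟨rfl, h⟩⟩

end basics

section machinery

lemma acyclic_mono {α β : Type*} {G1 : SimpleGraph α} {G2 : SimpleGraph β}
    (f : G1 ↪g G2) (h : G2.IsAcyclic) : G1.IsAcyclic := by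
  intro v c hc
  exact h (c.map f.toHom)
    ((SimpleGraph.Walk.map_isCycle_iff_of_injective f.injective).mpr hc)

lemma shrink {α : Type*} {G1 : SimpleGraph α} {A : Set α}
    (h : (G1.induce A).IsAcyclic) {t : ℕ} (ht : t ≤ A.ncard) :
    ∃ A' : Set α, A'.ncard = t ∧ (G1.induce A').IsAcyclic := by
  obtain ⟨A', hsub, hcard⟩ := Set.exists_subset_card_eq ht
  exact ⟨A', hcard, acyclic_mono (SimpleGraph.induceHomOfLE G1 hsub) h⟩

lemma reach_inv {α : Type*} {K' : SimpleGraph α} {L : α → Prop}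
    (hL : ∀ x y, K'.Adj x y → L x → L y) {x y : α} (h : K'.Reachable x y) :
    L x → L y := by
  obtain ⟨w⟩ := h
  induction w with
  | nil => exact id
  | cons hadj p ih => exact fun hx => ih (hL _ _ hadj hx)

variable {V : Type*} [LinearOrder V] {G : SimpleGraph V} {s : ℕ}

/-- The projection invariant. -/
def Qpred {A : Set V} (σ : G.edgeSet → Fin s → Set ↥A) :
    (V ⊕ (G.edgeSet × Fin s)) → ↥A → Prop
  | Sum.inl u, a => (a : V) = u
  | Sum.inr (e, i), a => a ∈ σ e i

lemma proj {A : Set V} {B : Set (V ⊕ (G.edgeSet × Fin s))}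
    (hB : ∀ a, Sum.inl a ∈ B → a ∈ A)
    {K' : SimpleGraph ↥B}
    (hK' : ∀ x y : ↥B, K'.Adj x y → (G.subdivision s).Adj ↑x ↑y)
    {T : SimpleGraph ↥A}
    (σ : G.edgeSet → Fin s → Set ↥A)
    (h1 : ∀ (e : G.edgeSet) (i j : Fin s) (x y : ↥B), (x : V ⊕ (G.edgeSet × Fin s)) = Sum.inr (e, i) →
      (y : V ⊕ (G.edgeSet × Fin s)) = Sum.inr (e, j) → K'.Adj x y → σ e i = σ e j)
    (h2 : ∀ (u : V) (e : G.edgeSet) (i : Fin s) (x y : ↥B), (x : V ⊕ (G.edgeSet × Fin s)) = Sum.inl u →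
      (y : V ⊕ (G.edgeSet × Fin s)) = Sum.inr (e, i) → K'.Adj x y →
      ∀ hu : u ∈ A, (⟨u, hu⟩ : ↥A) ∈ σ e i)
    (h3 : ∀ (e : G.edgeSet) (i : Fin s) (u : V) (x y : ↥B), (x : V ⊕ (G.edgeSet × Fin s)) = Sum.inr (e, i) →
      (y : V ⊕ (G.edgeSet × Fin s)) = Sum.inl u → K'.Adj x y →
      ∀ b ∈ σ e i, ∀ hu : u ∈ A, T.Reachable b ⟨u, hu⟩)
    {x y : ↥B} (hxy : K'.Reachable x y) :
    ∀ a : ↥A, Qpred σ ↑x a → ∃ b : ↥A, Qpred σ ↑y b ∧ T.Reachable a b := by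
  obtain ⟨w⟩ := hxy
  induction w with
  | nil => exact fun a ha => ⟨a, ha, SimpleGraph.Reachable.refl _⟩
  | @cons x x' y hadj p ih =>
    intro a ha
    have hsub := hK' _ _ hadj
    obtain ⟨xv, hxB⟩ := x
    obtain ⟨x'v, hx'B⟩ := x'
    match xv, x'v with
    | Sum.inl u, Sum.inl v => exact absurd hsub not_adj_inl_inl
    | Sum.inl u, Sum.inr (e, i) =>
      have hu : u ∈ A := ha ▸ a.2
      have ha' : a = ⟨u, hu⟩ := Subtype.ext ha
      subst ha'
      exact ih ⟨u, hu⟩ (h2 u e i _ _ rfl rfl hadj hu)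
    | Sum.inr (e, i), Sum.inl u =>
      have hu : u ∈ A := hB u hx'B
      obtain ⟨b, hb, hr⟩ := ih ⟨u, hu⟩ rfl
      exact ⟨b, hb, (h3 e i u _ _ rfl rfl hadj a ha hu).trans hr⟩
    | Sum.inr (e, i), Sum.inr (f, j) =>
      have hef : e = f := (adj_inr_inr.mp hsub).1
      subst hef
      have heq := h1 e i j _ _ rfl rfl hadj
      refine ih a ?_
      show a ∈ σ e j
      rw [← heq]
      exact ha

end machinery

set_option linter.unusedSectionVars false

section forward
variable {V : Type*} [LinearOrder V] {G : SimpleGraph V} {s : ℕ}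

/-- The vertex set of the subdivision corresponding to a set `A` of original vertices,
together with all internal vertices. -/
def Bfull (G : SimpleGraph V) (s : ℕ) (A : Set V) : Set (V ⊕ (G.edgeSet × Fin s)) :=
  Sum.inl '' A ∪ Set.range Sum.inr

lemma mem_Bfull_inl {A : Set V} {u : V} : Sum.inl u ∈ Bfull G s A ↔ u ∈ A := by
  simp [Bfull]

lemma mem_Bfull_inr {A : Set V} (p : G.edgeSet × Fin s) : Sum.inr p ∈ Bfull G s A := by
  simp [Bfull]

/-- The induced graph on `A` with the edge `e₀` deleted. -/
def Tdel (G : SimpleGraph V) (A : Set V) (e₀ : Sym2 V) : SimpleGraph ↥A :=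
  (G.induce A) \ SimpleGraph.fromEdgeSet {p : Sym2 ↥A | Sym2.map (↑·) p = e₀}

lemma tdel_adj {A : Set V} {e₀ : Sym2 V} {a b : ↥A} :
    (Tdel G A e₀).Adj a b ↔ G.Adj ↑a ↑b ∧ s((a : V), (b : V)) ≠ e₀ := by
  rw [Tdel, SimpleGraph.sdiff_adj, SimpleGraph.fromEdgeSet_adj]
  constructor
  · rintro ⟨h1, h2⟩
    refine ⟨h1, fun hd => h2 ⟨?_, fun hab => h1.ne hab⟩⟩
    simpa [Sym2.map_pair_eq] using hd
  · rintro ⟨h1, h2⟩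
    refine ⟨h1, fun hmem => h2 ?_⟩
    simpa [Sym2.map_pair_eq] using hmem.1

lemma tdel_bridge {A : Set V} (hA : (G.induce A).IsAcyclic) {u w : V}
    (hu : u ∈ A) (hw : w ∈ A) (hadj : G.Adj u w) :
    ¬ (Tdel G A s(u, w)).Reachable ⟨u, hu⟩ ⟨w, hw⟩ := by
  intro hr
  have hadj' : (G.induce A).Adj ⟨u, hu⟩ ⟨w, hw⟩ := hadj
  have hbr := (SimpleGraph.isAcyclic_iff_forall_adj_isBridge.mp hA) hadj'
  rw [SimpleGraph.isBridge_iff] at hbr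
  refine hbr (hr.mono ?_)
  intro a b hab
  rw [tdel_adj] at hab
  rw [SimpleGraph.deleteEdges, SimpleGraph.sdiff_adj, SimpleGraph.fromEdgeSet_adj]
  refine ⟨hab.1, ?_⟩
  rintro ⟨hmem, -⟩
  rw [Set.mem_singleton_iff] at hmem
  apply hab.2
  have := congrArg (Sym2.map (Subtype.val)) hmem
  simpa [Sym2.map_pair_eq] using this

lemma tdel_step {A : Set V} {e₀ : Sym2 V} {e : G.edgeSet} (hne : (e : Sym2 V) ≠ e₀)
    {b c : ↥A}
    (hb : (b : V) = Sym2.inf' (e : Sym2 V) ∨ (b : V) = Sym2.sup' (e : Sym2 V))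
    (hc : (c : V) = Sym2.inf' (e : Sym2 V) ∨ (c : V) = Sym2.sup' (e : Sym2 V)) :
    (Tdel G A e₀).Reachable b c := by
  by_cases hbc : (b : V) = (c : V)
  · rw [Subtype.ext hbc]
  · have hadj : G.Adj (b : V) (c : V) ∧ s((b : V), (c : V)) = (e : Sym2 V) := by
      rcases hb with hb | hb <;> rcases hc with hc | hc
      · exact absurd (hb.trans hc.symm) hbc
      · exact ⟨hb ▸ hc ▸ adj_infsup e.2, by rw [hb, hc, sym2_infsup]⟩
      · exact ⟨hb ▸ hc ▸ (adj_infsup e.2).symm, by rw [hb, hc, Sym2.eq_swap, sym2_infsup]⟩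
      · exact absurd (hb.trans hc.symm) hbc
    exact (tdel_adj.mpr ⟨hadj.1, hadj.2 ▸ hne⟩).reachable

lemma kdel_adj {B : Set (V ⊕ (G.edgeSet × Fin s))} {d : Sym2 ↥B} {x y : ↥B}
    (h : (((G.subdivision s).induce B) \ SimpleGraph.fromEdgeSet {d}).Adj x y) :
    (G.subdivision s).Adj ↑x ↑y ∧ s(x, y) ≠ d := by
  rw [SimpleGraph.sdiff_adj, SimpleGraph.fromEdgeSet_adj] at h
  exact ⟨h.1, fun hd => h.2 ⟨by simp [hd], fun hxy => h.1.ne (by simp [hxy])⟩⟩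

lemma forward_case_a {A : Set V} (hA : (G.induce A).IsAcyclic)
    (u₀ w₀ : V) (e₀ : G.edgeSet) (istar : Fin s)
    (P1 : (e₀ : Sym2 V) = s(u₀, w₀))
    (P3 : ∀ (v : V) (j : Fin s), (G.subdivision s).Adj (Sum.inl v) (Sum.inr (e₀, j)) →
      (v = u₀ ∧ j = istar) ∨ v = w₀)
    (x₀ y₀ : ↥(Bfull G s A)) (hx : (x₀ : V ⊕ (G.edgeSet × Fin s)) = Sum.inl u₀)
    (hy : (y₀ : V ⊕ (G.edgeSet × Fin s)) = Sum.inr (e₀, istar)) :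
    ¬ (((G.subdivision s).induce (Bfull G s A)) \
        SimpleGraph.fromEdgeSet {s(x₀, y₀)}).Reachable x₀ y₀ := by
  intro hreach
  set σ : G.edgeSet → Fin s → Set ↥A := fun e _ =>
    if e = e₀ then {b : ↥A | (b : V) = w₀}
    else {b : ↥A | (b : V) = Sym2.inf' (e : Sym2 V) ∨ (b : V) = Sym2.sup' (e : Sym2 V)} with hσ
  have hu₀ : u₀ ∈ A := mem_Bfull_inl.mp (hx ▸ x₀.2)
  have main := proj (T := Tdel G A (e₀ : Sym2 V))
    (fun a ha => mem_Bfull_inl.mp ha)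
    (fun x y h => (kdel_adj h).1) σ
    (fun e i j x y hxe hye hadj => rfl)
    ?_ ?_ hreach ⟨u₀, hu₀⟩ ?_
  · obtain ⟨b, hQb, hr⟩ := main
    rw [hy] at hQb
    have hbw : (b : V) = w₀ := by simpa [Qpred, hσ] using hQb
    have hw₀ : w₀ ∈ A := hbw ▸ b.2
    have hb' : b = ⟨w₀, hw₀⟩ := Subtype.ext hbw
    rw [hb'] at hr
    have hadjuw : G.Adj u₀ w₀ := by
      rw [← SimpleGraph.mem_edgeSet, ← P1]; exact e₀.2
    exact tdel_bridge hA hu₀ hw₀ hadjuw (P1 ▸ hr)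
  · -- h2
    intro u e i x y hxe hye hadj hu
    obtain ⟨hadjH, hne⟩ := kdel_adj hadj
    rw [hxe, hye] at hadjH
    by_cases he : e = e₀
    · subst he
      rcases P3 u i hadjH with ⟨rfl, rfl⟩ | rfl
      · exact absurd (by rw [Subtype.ext (hxe.trans hx.symm), Subtype.ext (hye.trans hy.symm)])
          hne
      · simp [hσ]
    · rcases adj_inl_inr.mp hadjH with ⟨h1, -⟩ | ⟨h1, -⟩ <;> simp [hσ, he, h1]
  · -- h3
    intro e i u x y hxe hye hadj b hb hu
    obtain ⟨hadjH, hne⟩ := kdel_adj hadj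
    rw [hxe, hye] at hadjH
    by_cases he : e = e₀
    · subst he
      have hbw : (b : V) = w₀ := by simpa [hσ] using hb
      rcases P3 u i hadjH.symm with ⟨rfl, rfl⟩ | rfl
      · refine absurd ?_ hne
        rw [Subtype.ext (hxe.trans hy.symm), Subtype.ext (hye.trans hx.symm), Sym2.eq_swap]
      · rw [show b = ⟨u, hu⟩ from Subtype.ext hbw]
    · have hbe : (b : V) = Sym2.inf' (e : Sym2 V) ∨ (b : V) = Sym2.sup' (e : Sym2 V) := by
        simpa [hσ, he] using hb
      have hue : u = Sym2.inf' (e : Sym2 V) ∨ u = Sym2.sup' (e : Sym2 V) := by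
        rcases adj_inl_inr.mp hadjH.symm with ⟨h1, -⟩ | ⟨h1, -⟩
        · exact Or.inl h1
        · exact Or.inr h1
      exact tdel_step (fun hc => he (Subtype.ext hc)) hbe
        (by rcases hue with h | h <;> [left; right] <;> exact h)
  · rw [hx]
    exact rfl

end forward

section forward2
set_option linter.unusedSectionVars false
variable {V : Type*} [LinearOrder V] {G : SimpleGraph V} {s : ℕ}

lemma forward_case_b {A : Set V} (hA : (G.induce A).IsAcyclic)
    (e₀ : G.edgeSet) (i₀ j₀ : Fin s) (hij : (i₀ : ℕ) + 1 = (j₀ : ℕ))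
    (x₀ y₀ : ↥(Bfull G s A)) (hx : (x₀ : V ⊕ (G.edgeSet × Fin s)) = Sum.inr (e₀, i₀))
    (hy : (y₀ : V ⊕ (G.edgeSet × Fin s)) = Sum.inr (e₀, j₀)) :
    ¬ (((G.subdivision s).induce (Bfull G s A)) \
        SimpleGraph.fromEdgeSet {s(x₀, y₀)}).Reachable x₀ y₀ := by
  intro hreach
  have hj₀s : (j₀ : ℕ) < s := j₀.2
  by_cases hinf : Sym2.inf' (e₀ : Sym2 V) ∈ A
  · -- projection argument
    set σ : G.edgeSet → Fin s → Set ↥A := fun e i =>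
      if e = e₀ then
        {b : ↥A | (b : V) = if (i : ℕ) ≤ (i₀ : ℕ) then Sym2.inf' (e₀ : Sym2 V)
          else Sym2.sup' (e₀ : Sym2 V)}
      else {b : ↥A | (b : V) = Sym2.inf' (e : Sym2 V) ∨ (b : V) = Sym2.sup' (e : Sym2 V)} with hσ
    have main := proj (T := Tdel G A (e₀ : Sym2 V))
      (fun a ha => mem_Bfull_inl.mp ha)
      (fun x y h => (kdel_adj h).1) σ
      ?_ ?_ ?_ hreach ⟨Sym2.inf' (e₀ : Sym2 V), hinf⟩ ?_
    · obtain ⟨b, hQb, hr⟩ := main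
      rw [hy] at hQb
      have hbw : (b : V) = Sym2.sup' (e₀ : Sym2 V) := by
        have hc : ¬ (j₀ ≤ i₀) := by simp only [Fin.le_def]; omega
        simpa [Qpred, hσ, hc] using hQb
      have hsup : Sym2.sup' (e₀ : Sym2 V) ∈ A := hbw ▸ b.2
      rw [show b = ⟨_, hsup⟩ from Subtype.ext hbw] at hr
      have hP1 : (e₀ : Sym2 V) = s(Sym2.inf' (e₀ : Sym2 V), Sym2.sup' (e₀ : Sym2 V)) :=
        (sym2_infsup _).symm
      exact tdel_bridge hA hinf hsup (adj_infsup e₀.2) (hP1 ▸ hr)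
    · -- h1
      intro e i j x y hxe hye hadj
      obtain ⟨hadjH, hne⟩ := kdel_adj hadj
      rw [hxe, hye] at hadjH
      by_cases he : e = e₀
      · subst he
        obtain ⟨-, hind⟩ := adj_inr_inr.mp hadjH
        have hiff : ((i : ℕ) ≤ (i₀ : ℕ)) ↔ ((j : ℕ) ≤ (i₀ : ℕ)) := by
          by_contra hcon
          have hcase : ((i : ℕ) = (i₀ : ℕ) ∧ (j : ℕ) = (j₀ : ℕ)) ∨
              ((j : ℕ) = (i₀ : ℕ) ∧ (i : ℕ) = (j₀ : ℕ)) := by omega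
          rcases hcase with ⟨h1, h2⟩ | ⟨h1, h2⟩
          · exact hne (by rw [Subtype.ext (hxe.trans (by rw [hx, Fin.ext h1])),
              Subtype.ext (hye.trans (by rw [hy, Fin.ext h2]))])
          · exact hne (by rw [Subtype.ext (hxe.trans (by rw [hy, Fin.ext h2])),
              Subtype.ext (hye.trans (by rw [hx, Fin.ext h1])), Sym2.eq_swap])
        simp only [hσ, if_pos rfl]
        rw [if_congr hiff rfl rfl]
      · simp [hσ, he]
    · -- h2
      intro u e i x y hxe hye hadj hu
      obtain ⟨hadjH, hne⟩ := kdel_adj hadj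
      rw [hxe, hye] at hadjH
      by_cases he : e = e₀
      · subst he
        rcases adj_inl_inr.mp hadjH with ⟨h1, h2⟩ | ⟨h1, h2⟩
        · have hc : i ≤ i₀ := by simp only [Fin.le_def]; omega
          simp [hσ, hc, h1]
        · have hc : ¬ (i ≤ i₀) := by simp only [Fin.le_def]; omega
          simp [hσ, hc, h1]
      · rcases adj_inl_inr.mp hadjH with ⟨h1, -⟩ | ⟨h1, -⟩ <;> simp [hσ, he, h1]
    · -- h3
      intro e i u x y hxe hye hadj b hb hu
      obtain ⟨hadjH, hne⟩ := kdel_adj hadj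
      rw [hxe, hye] at hadjH
      by_cases he : e = e₀
      · subst he
        rcases adj_inl_inr.mp hadjH.symm with ⟨h1, h2⟩ | ⟨h1, h2⟩
        · have hle : (i : ℕ) ≤ (i₀ : ℕ) := by omega
          have hbw : (b : V) = u := by
            have := hb; simp only [hσ, if_pos rfl, Set.mem_setOf_eq, if_pos hle] at this
            rw [this, h1]
          rw [show b = ⟨u, hu⟩ from Subtype.ext hbw]
        · have hle : ¬ ((i : ℕ) ≤ (i₀ : ℕ)) := by omega
          have hbw : (b : V) = u := by
            have := hb; simp only [hσ, if_pos rfl, Set.mem_setOf_eq, if_neg hle] at this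
            rw [this, h1]
          rw [show b = ⟨u, hu⟩ from Subtype.ext hbw]
      · have hbe : (b : V) = Sym2.inf' (e : Sym2 V) ∨ (b : V) = Sym2.sup' (e : Sym2 V) := by
          simpa [hσ, he] using hb
        have hue : u = Sym2.inf' (e : Sym2 V) ∨ u = Sym2.sup' (e : Sym2 V) := by
          rcases adj_inl_inr.mp hadjH.symm with ⟨h1, -⟩ | ⟨h1, -⟩
          · exact Or.inl h1
          · exact Or.inr h1
        exact tdel_step (fun hc => he (Subtype.ext hc)) hbe
          (by rcases hue with h | h <;> [left; right] <;> exact h)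
    · rw [hx]
      show _ ∈ σ e₀ i₀
      simp [hσ]
  · -- invariant argument: the low side of the chain is closed
    have hLy := reach_inv (L := fun x : ↥(Bfull G s A) =>
        ∃ j : Fin s, (j : ℕ) ≤ (i₀ : ℕ) ∧ (x : V ⊕ (G.edgeSet × Fin s)) = Sum.inr (e₀, j))
      ?_ hreach ⟨i₀, le_refl _, hx⟩
    · obtain ⟨j, hj, hy'⟩ := hLy
      rw [hy] at hy'
      have : j₀ = j := by
        have := (Sum.inr.inj hy')
        exact (Prod.ext_iff.mp this).2
      omega
    · rintro x y hadj ⟨j, hj, hxe⟩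
      obtain ⟨hadjH, hne⟩ := kdel_adj hadj
      rw [hxe] at hadjH
      obtain ⟨yv, hyB⟩ := y
      match yv with
      | Sum.inl v =>
        rcases adj_inl_inr.mp hadjH.symm with ⟨h1, h2⟩ | ⟨h1, h2⟩
        · exact absurd (h1 ▸ mem_Bfull_inl.mp hyB) hinf
        · omega
      | Sum.inr (f, j') =>
        obtain ⟨hef, hind⟩ := adj_inr_inr.mp hadjH
        subst hef
        by_cases hj' : (j' : ℕ) ≤ (i₀ : ℕ)
        · exact ⟨j', hj', rfl⟩
        · have h1 : (j : ℕ) = (i₀ : ℕ) ∧ (j' : ℕ) = (j₀ : ℕ) := by omega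
          have hxx : x = x₀ := Subtype.ext (hxe.trans (by rw [hx, Fin.ext h1.1]))
          have hyy : (⟨Sum.inr (e₀, j'), hyB⟩ : ↥(Bfull G s A)) = y₀ := by
            apply Subtype.ext
            show Sum.inr (e₀, j') = _
            rw [hy, Fin.ext h1.2]
          exact absurd (by rw [hxx, hyy]) hne
end forward2

section forward3
set_option linter.unusedSectionVars false
variable {V : Type*} [LinearOrder V] {G : SimpleGraph V} {s : ℕ}

theorem forward_acyclic {A : Set V} (hA : (G.induce A).IsAcyclic) :
    ((G.subdivision s).induce (Bfull G s A)).IsAcyclic := by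
  rw [SimpleGraph.isAcyclic_iff_forall_adj_isBridge]
  intro x y hadj
  rw [SimpleGraph.isBridge_iff]
  have hadjH : (G.subdivision s).Adj ↑x ↑y := hadj
  -- helper to build case (a) instances
  have caseA : ∀ (u : V) (e : G.edgeSet) (i : Fin s) (x y : ↥(Bfull G s A)),
      (x : V ⊕ (G.edgeSet × Fin s)) = Sum.inl u →
      (y : V ⊕ (G.edgeSet × Fin s)) = Sum.inr (e, i) →
      (G.subdivision s).Adj (Sum.inl u) (Sum.inr (e, i)) →
      ¬ (((G.subdivision s).induce (Bfull G s A)) \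
          SimpleGraph.fromEdgeSet {s(x, y)}).Reachable x y := by
    intro u e i x y hxe hye hadj'
    rcases adj_inl_inr.mp hadj' with ⟨h1, h2⟩ | ⟨h1, h2⟩
    · refine forward_case_a hA u (Sym2.sup' (e : Sym2 V)) e i ?_ ?_ x y hxe hye
      · rw [h1, sym2_infsup]
      · intro v j hadjvj
        rcases adj_inl_inr.mp hadjvj with ⟨g1, g2⟩ | ⟨g1, g2⟩
        · exact Or.inl ⟨g1.trans h1.symm, Fin.ext (by omega)⟩
        · exact Or.inr g1
    · refine forward_case_a hA u (Sym2.inf' (e : Sym2 V)) e i ?_ ?_ x y hxe hye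
      · rw [h1, Sym2.eq_swap, sym2_infsup]
      · intro v j hadjvj
        rcases adj_inl_inr.mp hadjvj with ⟨g1, g2⟩ | ⟨g1, g2⟩
        · exact Or.inr g1
        · exact Or.inl ⟨g1.trans h1.symm, Fin.ext (by omega)⟩
  obtain ⟨xv, hxB⟩ := x
  obtain ⟨yv, hyB⟩ := y
  match xv, yv with
  | Sum.inl u, Sum.inl v => exact absurd hadjH not_adj_inl_inl
  | Sum.inl u, Sum.inr (e, i) => exact caseA u e i _ _ rfl rfl hadjH
  | Sum.inr (e, i), Sum.inl u =>
    intro hr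
    refine caseA u e i ⟨Sum.inl u, hyB⟩ ⟨Sum.inr (e, i), hxB⟩ rfl rfl hadjH.symm ?_
    rw [show s((⟨Sum.inl u, hyB⟩ : ↥(Bfull G s A)), (⟨Sum.inr (e, i), hxB⟩ : ↥(Bfull G s A))) =
      s((⟨Sum.inr (e, i), hxB⟩ : ↥(Bfull G s A)), (⟨Sum.inl u, hyB⟩ : ↥(Bfull G s A))) from
        Sym2.eq_swap]
    exact hr.symm
  | Sum.inr (e, i), Sum.inr (f, j) =>
    obtain ⟨hef, hind⟩ := adj_inr_inr.mp hadjH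
    subst hef
    rcases hind with hlt | hlt
    · exact forward_case_b hA e i j hlt _ _ rfl rfl
    · intro hr
      refine forward_case_b hA e j i hlt ⟨Sum.inr (e, j), hyB⟩ ⟨Sum.inr (e, i), hxB⟩ rfl rfl ?_
      rw [show s((⟨Sum.inr (e, j), hyB⟩ : ↥(Bfull G s A)), (⟨Sum.inr (e, i), hxB⟩ : ↥(Bfull G s A))) =
        s((⟨Sum.inr (e, i), hxB⟩ : ↥(Bfull G s A)), (⟨Sum.inr (e, j), hyB⟩ : ↥(Bfull G s A))) from
          Sym2.eq_swap]
      exact hr.symm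

end forward3

section backward
set_option linter.unusedSectionVars false
variable {V : Type*} [LinearOrder V] {G : SimpleGraph V} {s : ℕ}

@[simp] lemma Sym2.inf'_mk {x y : V} : Sym2.inf' s(x, y) = x ⊓ y := rfl
@[simp] lemma Sym2.sup'_mk {x y : V} : Sym2.sup' s(x, y) = x ⊔ y := rfl

/-- The set of original vertices kept for the backward direction. -/
def Aback (G : SimpleGraph V) (s : ℕ) (B : Set (V ⊕ (G.edgeSet × Fin s))) : Set V :=
  {u | Sum.inl u ∈ B ∧ ∀ e : G.edgeSet, Sym2.inf' (e : Sym2 V) = u →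
    ∀ i : Fin s, Sum.inr (e, i) ∈ B}

theorem backward_acyclic (hs : 1 ≤ s) {B : Set (V ⊕ (G.edgeSet × Fin s))}
    (hB : ((G.subdivision s).induce B).IsAcyclic) :
    (G.induce (Aback G s B)).IsAcyclic := by
  rw [SimpleGraph.isAcyclic_iff_forall_adj_isBridge]
  suffices core : ∀ a b : ↥(Aback G s B), G.Adj ↑a ↑b →
      Sym2.inf' s((a : V), (b : V)) = ↑a →
      (G.induce (Aback G s B)).IsBridge s(a, b) by
    intro a b hadj
    have hG : G.Adj ↑a ↑b := hadj
    rcases le_total (a : V) (b : V) with h | h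
    · exact core a b hG (by simp [inf_eq_left.mpr h])
    · have := core b a hG.symm (by simp [inf_eq_left.mpr h])
      rwa [show s(a, b) = s(b, a) from Sym2.eq_swap]
  intro a b hadjG hinf
  rw [SimpleGraph.isBridge_iff]
  intro hreach
  set u : V := (a : V) with hu
  set v : V := (b : V) with hv
  have hne : u ≠ v := hadjG.ne
  set e₀ : G.edgeSet := ⟨s(u, v), hadjG⟩ with he₀
  have hsupv : Sym2.sup' (e₀ : Sym2 V) = v := by
    have h1 : s(Sym2.inf' (e₀ : Sym2 V), Sym2.sup' (e₀ : Sym2 V)) = s(u, v) := sym2_infsup _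
    rw [hinf] at h1
    exact (Sym2.congr_right.mp h1)
  have hinlu : Sum.inl u ∈ B := a.2.1
  have hinlv : Sum.inl v ∈ B := b.2.1
  have hchain : ∀ i : Fin s, Sum.inr (e₀, i) ∈ B := a.2.2 e₀ hinf
  set i0 : Fin s := ⟨0, hs⟩ with hi0
  set x₀ : ↥B := ⟨Sum.inl u, hinlu⟩ with hx₀
  set y₀ : ↥B := ⟨Sum.inr (e₀, i0), hchain i0⟩ with hy₀
  have hadjK : ((G.subdivision s).induce B).Adj x₀ y₀ :=
    adj_inl_inr.mpr (Or.inl ⟨hinf.symm, rfl⟩)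
  have hbr := (SimpleGraph.isAcyclic_iff_forall_adj_isBridge.mp hB) hadjK
  rw [SimpleGraph.isBridge_iff] at hbr
  apply hbr
  set K' := ((G.subdivision s).induce B) \ SimpleGraph.fromEdgeSet {s(x₀, y₀)} with hK'
  have hK'adj : ∀ (x y : ↥B), (G.subdivision s).Adj ↑x ↑y → s(x, y) ≠ s(x₀, y₀) →
      K'.Adj x y := by
    intro x y h hneq
    rw [hK', SimpleGraph.sdiff_adj, SimpleGraph.fromEdgeSet_adj]
    exact ⟨h, fun hc => hneq hc.1⟩
  have hdel : ∀ (x y : ↥B), s(x, y) = s(x₀, y₀) →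
      (((x : V ⊕ (G.edgeSet × Fin s)) = Sum.inl u ∧
        (y : V ⊕ (G.edgeSet × Fin s)) = Sum.inr (e₀, i0)) ∨
       ((x : V ⊕ (G.edgeSet × Fin s)) = Sum.inr (e₀, i0) ∧
        (y : V ⊕ (G.edgeSet × Fin s)) = Sum.inl u)) := by
    intro x y hc
    rcases Sym2.eq_iff.mp hc with ⟨h1, h2⟩ | ⟨h1, h2⟩
    · exact Or.inl ⟨by rw [h1, hx₀], by rw [h2, hy₀]⟩
    · exact Or.inr ⟨by rw [h1, hy₀], by rw [h2, hx₀]⟩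
  -- climbing up a chain of an edge `f ≠ e₀`
  have chainup : ∀ (f : G.edgeSet) (hmem : ∀ i : Fin s, Sum.inr (f, i) ∈ B)
      (hin : Sum.inl (Sym2.inf' (f : Sym2 V)) ∈ B), f ≠ e₀ → ∀ (n : ℕ) (h : n < s),
      K'.Reachable ⟨Sum.inl (Sym2.inf' (f : Sym2 V)), hin⟩ ⟨Sum.inr (f, ⟨n, h⟩), hmem _⟩ := by
    intro f hmem hin hf n
    induction n with
    | zero =>
      intro h
      refine (hK'adj _ _ (adj_inl_inr.mpr (Or.inl ⟨rfl, rfl⟩)) ?_).reachable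
      intro hc
      rcases hdel _ _ hc with ⟨h1, h2⟩ | ⟨h1, h2⟩
      · exact hf (congrArg Prod.fst (Sum.inr.inj h2))
      · simp at h1
    | succ n ih =>
      intro h
      refine (ih (by omega)).trans (hK'adj _ _ (adj_inr_inr.mpr ⟨rfl, Or.inl rfl⟩) ?_).reachable
      intro hc
      rcases hdel _ _ hc with ⟨h1, h2⟩ | ⟨h1, h2⟩
      · simp at h1
      · simp at h2
  -- crossing a whole chain of an edge `f ≠ e₀`
  have chaincross : ∀ (f : G.edgeSet) (hmem : ∀ i : Fin s, Sum.inr (f, i) ∈ B) (p q : V)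
      (hpq : (Sym2.inf' (f : Sym2 V) = p ∧ Sym2.sup' (f : Sym2 V) = q) ∨
        (Sym2.inf' (f : Sym2 V) = q ∧ Sym2.sup' (f : Sym2 V) = p))
      (hp : Sum.inl p ∈ B) (hq : Sum.inl q ∈ B), f ≠ e₀ →
      K'.Reachable ⟨Sum.inl p, hp⟩ ⟨Sum.inl q, hq⟩ := by
    have main : ∀ (f : G.edgeSet) (hmem : ∀ i : Fin s, Sum.inr (f, i) ∈ B)
        (hin : Sum.inl (Sym2.inf' (f : Sym2 V)) ∈ B)
        (hsup : Sum.inl (Sym2.sup' (f : Sym2 V)) ∈ B), f ≠ e₀ →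
        K'.Reachable ⟨Sum.inl (Sym2.inf' (f : Sym2 V)), hin⟩
          ⟨Sum.inl (Sym2.sup' (f : Sym2 V)), hsup⟩ := by
      intro f hmem hin hsup hf
      refine (chainup f hmem hin hf (s - 1) (by omega)).trans
        (hK'adj _ _ (adj_inl_inr.mpr (Or.inr ⟨rfl, rfl⟩)).symm ?_).reachable
      intro hc
      rcases hdel _ _ hc with ⟨h1, h2⟩ | ⟨h1, h2⟩
      · simp at h1
      · exact hf (congrArg Prod.fst (Sum.inr.inj h1))
    intro f hmem p q hpq hp hq hf
    rcases hpq with ⟨h1, h2⟩ | ⟨h1, h2⟩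
    · subst h1; subst h2; exact main f hmem hp hq hf
    · subst h1; subst h2; exact (main f hmem hq hp hf).symm
  -- lifting a walk in the deleted induced graph on `Aback`
  have lift : ∀ {c d : ↥(Aback G s B)}
      (w : ((G.induce (Aback G s B)) \ SimpleGraph.fromEdgeSet {s(a, b)}).Walk c d),
      K'.Reachable ⟨Sum.inl ↑c, c.2.1⟩ ⟨Sum.inl ↑d, d.2.1⟩ := by
    intro c d w
    induction w with
    | nil => exact SimpleGraph.Reachable.refl _
    | @cons c c' d hstep p ih =>
      rw [SimpleGraph.sdiff_adj, SimpleGraph.fromEdgeSet_adj] at hstep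
      obtain ⟨hadj', hnd⟩ := hstep
      have hGcc : G.Adj (c : V) (c' : V) := hadj'
      have hndel : s(c, c') ≠ s(a, b) := fun hc => hnd ⟨hc, fun h => hGcc.ne (by rw [h])⟩
      set f : G.edgeSet := ⟨s((c : V), (c' : V)), hGcc⟩ with hf
      have hfne : f ≠ e₀ := by
        intro hfe
        have hcoe : s((c : V), (c' : V)) = s(u, v) := congrArg Subtype.val hfe
        rcases Sym2.eq_iff.mp hcoe with ⟨h1, h2⟩ | ⟨h1, h2⟩
        · exact hndel (by rw [Subtype.ext (h1 : (c : V) = ↑a), Subtype.ext (h2 : (c' : V) = ↑b)])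
        · refine hndel ?_
          rw [Subtype.ext (h1 : (c : V) = ↑b), Subtype.ext (h2 : (c' : V) = ↑a), Sym2.eq_swap]
      have hmemf : ∀ i : Fin s, Sum.inr (f, i) ∈ B := by
        rcases le_total (c : V) (c' : V) with h | h
        · exact c.2.2 f (by simp [hf, inf_eq_left.mpr h])
        · exact c'.2.2 f (by simp [hf, inf_eq_right.mpr h])
      have hstep2 : K'.Reachable ⟨Sum.inl ↑c, c.2.1⟩ ⟨Sum.inl ↑c', c'.2.1⟩ := by
        refine chaincross f hmemf _ _ ?_ c.2.1 c'.2.1 hfne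
        rcases le_total (c : V) (c' : V) with h | h
        · exact Or.inl ⟨by simp [hf, inf_eq_left.mpr h], by simp [hf, sup_eq_right.mpr h]⟩
        · exact Or.inr ⟨by simp [hf, inf_eq_right.mpr h], by simp [hf, sup_eq_left.mpr h]⟩
      exact hstep2.trans ih
  -- descending the chain of `e₀` from the `v` end down to index 0
  have chaindown : ∀ (n : ℕ) (h : n < s),
      K'.Reachable ⟨Sum.inr (e₀, ⟨n, h⟩), hchain _⟩ y₀ := by
    intro n
    induction n with
    | zero => intro h; exact SimpleGraph.Reachable.refl _
    | succ n ih =>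
      intro h
      refine (hK'adj ⟨Sum.inr (e₀, ⟨n + 1, h⟩), hchain _⟩ ⟨Sum.inr (e₀, ⟨n, by omega⟩), hchain _⟩
        (adj_inr_inr.mpr ⟨rfl, Or.inr rfl⟩) ?_).reachable.trans (ih (by omega))
      intro hc
      rcases hdel _ _ hc with ⟨h1, h2⟩ | ⟨h1, h2⟩
      · simp at h1
      · simp at h2
  have htop : K'.Reachable ⟨Sum.inl v, hinlv⟩ y₀ := by
    refine (hK'adj ⟨Sum.inl v, hinlv⟩ ⟨Sum.inr (e₀, ⟨s - 1, by omega⟩), hchain _⟩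
      (adj_inl_inr.mpr (Or.inr ⟨hsupv.symm, rfl⟩)) ?_).reachable.trans (chaindown (s - 1) _)
    intro hc
    rcases hdel _ _ hc with ⟨h1, h2⟩ | ⟨h1, h2⟩
    · exact hne (Sum.inl.inj h1).symm
    · simp at h1
  obtain ⟨w⟩ := hreach
  exact (lift w).trans htop

end backward

section counting
set_option linter.unusedSectionVars false
variable {V : Type*} [Fintype V] [LinearOrder V] {G : SimpleGraph V} [DecidableRel G.Adj]
  {s : ℕ}

lemma bfull_ncard (A : Set V) :
    (Bfull G s A).ncard = A.ncard + (Set.univ : Set (G.edgeSet × Fin s)).ncard := by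
  rw [Bfull, Set.ncard_union_eq ?_ (Set.toFinite _) (Set.toFinite _)]
  · rw [Set.ncard_image_of_injective _ Sum.inl_injective, ← Set.image_univ,
      Set.ncard_image_of_injective _ Sum.inr_injective]
  · rw [Set.disjoint_left]
    rintro x ⟨a, -, rfl⟩ ⟨p, hp⟩
    cases hp

lemma univ_prod_ncard :
    (Set.univ : Set (G.edgeSet × Fin s)).ncard = s * G.edgeSet.ncard := by
  rw [Set.ncard_univ, Nat.card_eq_fintype_card, Fintype.card_prod, Fintype.card_fin,
    ← Nat.card_coe_set_eq, Nat.card_eq_fintype_card, mul_comm]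

lemma aback_ncard (B : Set (V ⊕ (G.edgeSet × Fin s))) :
    B.ncard ≤ (Aback G s B).ncard + (Set.univ : Set (G.edgeSet × Fin s)).ncard := by
  classical
  set B₁ : Set V := {u | Sum.inl u ∈ B} with hB₁
  set B₂ : Set (G.edgeSet × Fin s) := {p | Sum.inr p ∈ B} with hB₂
  set bad : Set G.edgeSet := {e | ∃ i : Fin s, Sum.inr (e, i) ∉ B} with hbad
  set badset : Set V := (fun e : G.edgeSet => Sym2.inf' (e : Sym2 V)) '' bad with hbadset
  have hBdecomp : B = Sum.inl '' B₁ ∪ Sum.inr '' B₂ := by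
    ext x
    cases x with
    | inl u => simp [hB₁, hB₂]
    | inr p => simp [hB₁, hB₂]
  have hBcard : B.ncard = B₁.ncard + B₂.ncard := by
    rw [hBdecomp, Set.ncard_union_eq ?_ (Set.toFinite _) (Set.toFinite _),
      Set.ncard_image_of_injective _ Sum.inl_injective,
      Set.ncard_image_of_injective _ Sum.inr_injective]
    rw [Set.disjoint_left]
    rintro x ⟨a, -, rfl⟩ ⟨p, -, hp⟩
    cases hp
  have hAsub : B₁ \ badset ⊆ Aback G s B := by
    rintro u ⟨hu1, hu2⟩
    refine ⟨hu1, fun e he i => ?_⟩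
    by_contra hc
    exact hu2 ⟨e, ⟨i, hc⟩, he⟩
  have h1 : B₁.ncard ≤ (Aback G s B).ncard + badset.ncard := by
    calc B₁.ncard ≤ ((B₁ \ badset) ∪ badset).ncard := by
          refine Set.ncard_le_ncard (fun x hx => ?_) (Set.toFinite _)
          by_cases h : x ∈ badset
          · exact Or.inr h
          · exact Or.inl ⟨hx, h⟩
      _ ≤ (B₁ \ badset).ncard + badset.ncard := Set.ncard_union_le _ _
      _ ≤ (Aback G s B).ncard + badset.ncard := by
          exact Nat.add_le_add_right (Set.ncard_le_ncard hAsub (Set.toFinite _)) _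
  have h2 : badset.ncard ≤ bad.ncard := Set.ncard_image_le (Set.toFinite _)
  have h3 : bad.ncard ≤ B₂ᶜ.ncard := by
    have hsub : bad ⊆ Prod.fst '' (B₂ᶜ) := by
      rintro e ⟨i, hi⟩
      exact ⟨(e, i), hi, rfl⟩
    exact le_trans (Set.ncard_le_ncard hsub (Set.toFinite _))
      (Set.ncard_image_le (Set.toFinite _))
  have h4 : B₂.ncard + B₂ᶜ.ncard = (Set.univ : Set (G.edgeSet × Fin s)).ncard := by
    rw [← Set.ncard_union_eq disjoint_compl_right (Set.toFinite _) (Set.toFinite _),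
      Set.union_compl_self]
  omega

end counting

/-- Let `G` be a finite simple graph with `n` vertices and `m` edges, `s ≥ 1`
an integer, and `G*` the `s`-subdivision of `G`, which has `N = n + s·m` vertices.  Then for
every integer `k ≥ 0`, `G` has an induced forest on `n - k` vertices if and only if `G*` has an
induced forest on `N - k` vertices. -/
theorem stmt10 {V : Type*} [Fintype V] [LinearOrder V]
    (G : SimpleGraph V) [DecidableRel G.Adj] (s : ℕ) (hs : 1 ≤ s) :
    Fintype.card (V ⊕ (G.edgeSet × Fin s)) = Fintype.card V + s * G.edgeSet.ncard ∧
      ∀ k : ℕ,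
        (∃ A : Set V, A.ncard = Fintype.card V - k ∧ (G.induce A).IsAcyclic) ↔
          ∃ B : Set (V ⊕ (G.edgeSet × Fin s)),
            B.ncard = Fintype.card V + s * G.edgeSet.ncard - k ∧
            ((G.subdivision s).induce B).IsAcyclic := by
  have hM : (Set.univ : Set (G.edgeSet × Fin s)).ncard = s * G.edgeSet.ncard :=
    univ_prod_ncard
  constructor
  · rw [Fintype.card_sum, Fintype.card_prod, Fintype.card_fin,
      ← Nat.card_coe_set_eq, Nat.card_eq_fintype_card, mul_comm]
  intro k
  constructor
  · rintro ⟨A, hA, hac⟩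
    have hBcard : (Bfull G s A).ncard = (Fintype.card V - k) + s * G.edgeSet.ncard := by
      rw [bfull_ncard, hA, hM]
    refine shrink (forward_acyclic hac) ?_
    rw [hBcard]
    omega
  · rintro ⟨B, hBcard, hBac⟩
    have hac := backward_acyclic hs hBac
    have hcount := aback_ncard B
    rw [hM, hBcard] at hcount
    refine shrink hac ?_
    omega
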